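/- Regularity after blow-up: for every solution a(t) of the dyadic system with a(0) ∈ ℓ² and a_j(0) ≥ 0, the Sobolev norm ‖a(t)‖_{H^s}² = Σ_j 2^{2sj} a_j(t)² is locally integrable on [0,∞) for every s < 5/6. -/

import Mathlib

open Real Set MeasureTheory Finset Filter

noncomputable def lam : ℝ := (2:ℝ) ^ ((5:ℝ)/2)

/-- Right-hand side of the dyadic system: `da_j/dt = λ^{j-1} a_{j-1}² − λ^j a_j a_{j+1} + f_j`
with `a_{-1}=0`, forcing `f_0 > 0`, `f_j = 0` for `j ≥ 1`. -/
noncomputable def dyadicRHS (f0 : ℝ) (a : ℕ → ℝ) : ℕ → ℝ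
  | 0 => -(a 0 * a 1) + f0
  | (j+1) => lam ^ j * (a j)^2 - lam ^ (j+1) * a (j+1) * a (j+2)

/-- A weak (= classical) solution of the dyadic system on `[0,∞)`: an `ℓ²`-valued
function whose components are differentiable and satisfy the ODEs. -/
def IsDyadicSolution (f0 : ℝ) (a : ℝ → ℕ → ℝ) : Prop :=
  (∀ t ∈ Ici (0:ℝ), Summable (fun j => (a t j)^2)) ∧
  (∀ j, ∀ t ∈ Ici (0:ℝ), HasDerivWithinAt (fun s => a s j) (dyadicRHS f0 (a t) j) (Ici 0) t)

lemma one_lt_lam : 1 < lam := by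
  rw [lam]
  have := Real.one_lt_rpow_iff_of_pos (x := (2:ℝ)) (y := (5:ℝ)/2) (by norm_num)
  rw [this]; left; constructor <;> norm_num

lemma lam_pos : 0 < lam := lt_trans one_pos one_lt_lam
lemma one_le_lam : 1 ≤ lam := one_lt_lam.le

lemma sol_contOn {f0 : ℝ} {a : ℝ → ℕ → ℝ} (ha : IsDyadicSolution f0 a) (j : ℕ) :
    ContinuousOn (fun t => a t j) (Ici 0) := fun t ht => (ha.2 j t ht).continuousWithinAt

lemma sol_cont {f0 : ℝ} {a : ℝ → ℕ → ℝ} (ha : IsDyadicSolution f0 a) (j : ℕ) :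
    Continuous (fun t => a (max t 0) j) :=
  (sol_contOn ha j).comp_continuous (continuous_id.max continuous_const)
    (fun x => mem_Ici.2 (le_max_right x 0))

lemma sol_hasDerivAt {f0 : ℝ} {a : ℝ → ℕ → ℝ} (ha : IsDyadicSolution f0 a) (j : ℕ)
    {t : ℝ} (ht : 0 < t) :
    HasDerivAt (fun u => a (max u 0) j) (dyadicRHS f0 (fun i => a (max t 0) i) j) t := by
  have h1 : HasDerivAt (fun u => a u j) (dyadicRHS f0 (a t) j) t :=
    (ha.2 j t ht.le).hasDerivAt (Ici_mem_nhds ht)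
  have h2 : (fun u => a (max u 0) j) =ᶠ[nhds t] (fun u => a u j) := by
    filter_upwards [Ioi_mem_nhds ht] with u hu
    rw [max_eq_left (le_of_lt hu)]
  have h3 : (fun i => a (max t 0) i) = a t := by
    funext i; rw [max_eq_left ht.le]
  rw [h3]
  exact h1.congr_of_eventuallyEq h2

lemma sum_mul_dyadicRHS (f0 : ℝ) (v : ℕ → ℝ) (N : ℕ) :
    ∑ j ∈ range (N+1), v j * dyadicRHS f0 v j
      = f0 * v 0 - lam ^ N * (v N)^2 * v (N+1) := by
  induction N with
  | zero =>
      rw [Finset.sum_range_one]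
      show v 0 * (-(v 0 * v 1) + f0) = _
      simp; ring
  | succ n ih =>
      rw [Finset.sum_range_succ, ih]
      show _ + v (n+1) * (lam ^ n * (v n)^2 - lam ^ (n+1) * v (n+1) * v (n+2)) = _
      ring

lemma tsum_eq_toReal {f : ℕ → ℝ} (hf : ∀ j, 0 ≤ f j) :
    ∑' j, f j = (∑' j, ENNReal.ofReal (f j)).toReal := by
  by_cases hs : Summable f
  · rw [← ENNReal.ofReal_tsum_of_nonneg hf hs, ENNReal.toReal_ofReal (tsum_nonneg hf)]
  · rw [tsum_eq_zero_of_not_summable hs]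
    have h : ∑' j, ENNReal.ofReal (f j) = ⊤ := by
      by_contra h
      exact hs ((ENNReal.summable_toReal h).congr
        (fun j => ENNReal.toReal_ofReal (hf j)))
    rw [h]; simp

lemma max_one_rpow {X e : ℝ} (hX : 0 ≤ X) (he : 0 ≤ e) :
    (max 1 X) ^ e = max 1 (X ^ e) := by
  rcases le_total 1 X with h | h
  · rw [max_eq_right h, max_eq_right]
    calc (1:ℝ) = 1 ^ e := (Real.one_rpow e).symm
      _ ≤ X ^ e := Real.rpow_le_rpow zero_le_one h he
  · rw [max_eq_left h, max_eq_left, Real.one_rpow]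
    calc X ^ e ≤ 1 ^ e := Real.rpow_le_rpow hX h he
      _ = 1 := Real.one_rpow e

lemma sol_nonneg {f0 : ℝ} {a : ℝ → ℕ → ℝ} (hf0 : 0 < f0) (ha : IsDyadicSolution f0 a)
    (h0 : ∀ j, 0 ≤ a 0 j) (j : ℕ) (t : ℝ) : 0 ≤ a (max t 0) j := by
  set T := max t 0 with hT
  have hT0 : 0 ≤ T := le_max_right t 0
  rcases hT0.eq_or_lt with h | hTpos
  · rw [← h]; exact h0 j
  -- damping integrating factor
  set g : ℝ → ℝ := fun u => lam ^ j * a (max u 0) (j+1) with hg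
  have hgc : Continuous g := continuous_const.mul (sol_cont ha (j+1))
  set G : ℝ → ℝ := fun u => ∫ x in (0:ℝ)..u, g x with hGdef
  have hG : ∀ u : ℝ, HasDerivAt G (g u) u := by
    intro u
    exact intervalIntegral.integral_hasDerivAt_right (hgc.intervalIntegrable 0 u)
      hgc.stronglyMeasurable.stronglyMeasurableAtFilter hgc.continuousAt
  have hGc : Continuous G := by
    have : Differentiable ℝ G := fun u => (hG u).differentiableAt
    exact this.continuous
  set H : ℝ → ℝ := fun u => a (max u 0) j * Real.exp (G u) with hH
  have hHc : Continuous H := (sol_cont ha j).mul (Real.continuous_exp.comp hGc)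
  have hHd : ∀ x : ℝ, 0 < x →
      HasDerivAt H ((dyadicRHS f0 (fun i => a (max x 0) i) j
          + a (max x 0) j * g x) * Real.exp (G x)) x := by
    intro x hx
    have h1 := sol_hasDerivAt ha j hx
    have h2 : HasDerivAt (fun u => Real.exp (G u)) (Real.exp (G x) * g x) x :=
      (hG x).exp
    have := h1.fun_mul h2
    rw [show (dyadicRHS f0 (fun i => a (max x 0) i) j + a (max x 0) j * g x) * Real.exp (G x)
        = dyadicRHS f0 (fun i => a (max x 0) i) j * Real.exp (G x)
          + a (max x 0) j * (Real.exp (G x) * g x) from by ring]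
    exact this
  have hmono : MonotoneOn H (Icc 0 T) := by
    apply monotoneOn_of_deriv_nonneg (convex_Icc 0 T) hHc.continuousOn
    · intro x hx
      rw [interior_Icc] at hx
      exact ((hHd x hx.1).differentiableAt).differentiableWithinAt
    · intro x hx
      rw [interior_Icc] at hx
      rw [(hHd x hx.1).deriv]
      have hkey : 0 ≤ dyadicRHS f0 (fun i => a (max x 0) i) j
          + a (max x 0) j * g x := by
        rw [hg]
        cases j with
        | zero =>
            show 0 ≤ -(a (max x 0) 0 * a (max x 0) 1) + f0
              + a (max x 0) 0 * (lam ^ 0 * a (max x 0) (0+1))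
            simp only [pow_zero]
            have : -(a (max x 0) 0 * a (max x 0) 1) + f0
              + a (max x 0) 0 * (1 * a (max x 0) (0+1)) = f0 := by ring
            rw [this]; exact hf0.le
        | succ n =>
            show 0 ≤ lam ^ n * (a (max x 0) n)^2
              - lam ^ (n+1) * a (max x 0) (n+1) * a (max x 0) (n+2)
              + a (max x 0) (n+1) * (lam ^ (n+1) * a (max x 0) (n+1+1))
            have : lam ^ n * (a (max x 0) n)^2
              - lam ^ (n+1) * a (max x 0) (n+1) * a (max x 0) (n+2)
              + a (max x 0) (n+1) * (lam ^ (n+1) * a (max x 0) (n+1+1))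
              = lam ^ n * (a (max x 0) n)^2 := by ring
            rw [this]
            exact mul_nonneg (pow_nonneg lam_pos.le n) (sq_nonneg _)
      exact mul_nonneg hkey (Real.exp_pos _).le
  have h01 : H 0 ≤ H T :=
    hmono (left_mem_Icc.2 hT0) (right_mem_Icc.2 hT0) hT0
  have hH0 : H 0 = a 0 j := by
    rw [hH]
    simp only [max_self]
    have : G 0 = 0 := intervalIntegral.integral_same
    rw [this, Real.exp_zero, mul_one]
  have hHT : 0 ≤ H T := le_trans (by rw [hH0]; exact h0 j) h01
  have hHT2 : 0 ≤ a T j * Real.exp (G T) := by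
    have : H T = a T j * Real.exp (G T) := by
      rw [hH]; simp only [max_eq_left hT0]
    rwa [this] at hHT
  exact (mul_nonneg_iff_of_pos_right (Real.exp_pos (G T))).mp hHT2

lemma energy_bound {f0 : ℝ} {a : ℝ → ℕ → ℝ} (hf0 : 0 < f0) (ha : IsDyadicSolution f0 a)
    (h0 : ∀ j, 0 ≤ a 0 j) {T : ℝ} (hT : 0 ≤ T) (N : ℕ) :
    ∀ t ∈ Icc (0:ℝ) T, ∑ j ∈ range (N+1), (a (max t 0) j)^2
      ≤ (1 + ∑' j, (a 0 j)^2) * Real.exp (f0 * T) := by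
  set A : ℕ → ℝ → ℝ := fun j u => a (max u 0) j with hA
  have hApos : ∀ j u, 0 ≤ A j u := fun j u => sol_nonneg hf0 ha h0 j u
  set EN : ℝ → ℝ := fun u => ∑ j ∈ range (N+1), (A j u)^2 with hEN
  have hENc : Continuous EN := continuous_finset_sum _ (fun j _ => (sol_cont ha j).pow 2)
  set D : ℝ → ℝ := fun u => 2 * (f0 * A 0 u - lam ^ N * ((A N u)^2 * A (N+1) u)) with hD
  have hENd : ∀ x : ℝ, 0 < x → HasDerivAt EN (D x) x := by
    intro x hx
    have h1 : ∀ j ∈ range (N+1), HasDerivAt (fun u => (A j u)^2)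
        ((2:ℕ) * (A j x) ^ 1 * dyadicRHS f0 (fun i => A i x) j) x :=
      fun j _ => (sol_hasDerivAt ha j hx).pow 2
    have h2 := HasDerivAt.fun_sum h1
    have h3 : ∑ j ∈ range (N+1), ((2:ℕ) * (A j x) ^ 1 * dyadicRHS f0 (fun i => A i x) j)
        = D x := by
      simp only [pow_one, Nat.cast_ofNat, mul_assoc]
      rw [← Finset.mul_sum, sum_mul_dyadicRHS]
      show (2:ℝ) * (f0 * A 0 x - lam ^ N * (A N x)^2 * A (N+1) x) = _
      rw [hD]; ring
    rw [h3] at h2; exact h2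
  set W : ℝ → ℝ := fun u => (1 + EN u) * Real.exp (-(f0 * u)) with hW
  have hWc : Continuous W :=
    (continuous_const.add hENc).mul (Real.continuous_exp.comp (continuous_const.mul continuous_id).neg)
  have hWd : ∀ x : ℝ, 0 < x →
      HasDerivAt W (D x * Real.exp (-(f0 * x))
        + (1 + EN x) * (Real.exp (-(f0 * x)) * (-f0))) x := by
    intro x hx
    have h1 : HasDerivAt (fun u => 1 + EN u) (D x) x := (hENd x hx).const_add 1
    have h2 : HasDerivAt (fun u => Real.exp (-(f0 * u))) (Real.exp (-(f0 * x)) * (-f0)) x := by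
      have : HasDerivAt (fun u : ℝ => -(f0 * u)) (-f0) x := by
        simpa using ((hasDerivAt_id x).const_mul f0).fun_neg
      exact this.exp
    exact h1.mul h2
  have hanti : AntitoneOn W (Icc 0 T) := by
    apply antitoneOn_of_deriv_nonpos (convex_Icc 0 T) hWc.continuousOn
    · intro x hx
      rw [interior_Icc] at hx
      exact (hWd x hx.1).differentiableAt.differentiableWithinAt
    · intro x hx
      rw [interior_Icc] at hx
      rw [(hWd x hx.1).deriv]
      have hflux : 0 ≤ lam ^ N * ((A N x)^2 * A (N+1) x) :=
        mul_nonneg (pow_nonneg lam_pos.le N) (mul_nonneg (sq_nonneg _) (hApos _ _))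
      have hA0 : 2 * A 0 x ≤ 1 + (A 0 x)^2 := by nlinarith [sq_nonneg (A 0 x - 1)]
      have hA0E : (A 0 x)^2 ≤ EN x :=
        Finset.single_le_sum (f := fun j => (A j x)^2)
          (fun i _ => sq_nonneg _) (Finset.mem_range.2 (Nat.succ_pos N))
      have hDle : D x ≤ f0 * (1 + EN x) := by
        rw [hD]
        have : 2 * (f0 * A 0 x - lam ^ N * ((A N x)^2 * A (N+1) x))
            ≤ 2 * (f0 * A 0 x) := by nlinarith
        calc 2 * (f0 * A 0 x - lam ^ N * ((A N x)^2 * A (N+1) x))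
            ≤ 2 * (f0 * A 0 x) := this
          _ = f0 * (2 * A 0 x) := by ring
          _ ≤ f0 * (1 + (A 0 x)^2) := by nlinarith
          _ ≤ f0 * (1 + EN x) := by nlinarith
      have hexp : 0 < Real.exp (-(f0 * x)) := Real.exp_pos _
      nlinarith
  intro t ht
  have h1 : W t ≤ W 0 := hanti (left_mem_Icc.2 hT) ht ht.1
  have hW0 : W 0 = 1 + EN 0 := by rw [hW]; simp
  have hEN0 : EN 0 ≤ ∑' j, (a 0 j)^2 := by
    rw [hEN]
    have : ∀ j, A j 0 = a 0 j := fun j => by rw [hA]; simp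
    calc ∑ j ∈ range (N+1), (A j 0)^2 = ∑ j ∈ range (N+1), (a 0 j)^2 := by
          apply Finset.sum_congr rfl; intro j _; rw [this j]
      _ ≤ ∑' j, (a 0 j)^2 := (ha.1 0 self_mem_Ici).sum_le_tsum _ (fun i _ => sq_nonneg _)
  have hexp : 0 < Real.exp (-(f0 * t)) := Real.exp_pos _
  have h2 : (1 + EN t) * Real.exp (-(f0 * t)) ≤ 1 + ∑' j, (a 0 j)^2 := by
    calc (1 + EN t) * Real.exp (-(f0 * t)) = W t := by rw [hW]
      _ ≤ W 0 := h1
      _ = 1 + EN 0 := hW0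
      _ ≤ 1 + ∑' j, (a 0 j)^2 := by linarith
  have h3 : 1 + EN t ≤ (1 + ∑' j, (a 0 j)^2) * Real.exp (f0 * t) := by
    have := mul_le_mul_of_nonneg_right h2 (Real.exp_pos (f0 * t)).le
    rwa [mul_assoc, ← Real.exp_add, neg_add_cancel, Real.exp_zero, mul_one] at this
  have h4 : Real.exp (f0 * t) ≤ Real.exp (f0 * T) :=
    Real.exp_le_exp.2 (mul_le_mul_of_nonneg_left ht.2 hf0.le)
  have hS0 : (0:ℝ) ≤ ∑' j, (a 0 j)^2 := tsum_nonneg (fun j => sq_nonneg _)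
  calc ∑ j ∈ range (N+1), (a (max t 0) j)^2 = EN t := rfl
    _ ≤ (1 + ∑' j, (a 0 j)^2) * Real.exp (f0 * t) := by linarith
    _ ≤ (1 + ∑' j, (a 0 j)^2) * Real.exp (f0 * T) := by nlinarith


lemma integral_CS {f g : ℝ → ℝ} {t1 t2 : ℝ} (h12 : t1 ≤ t2)
    (hf : Continuous f) (hg : Continuous g)
    (hf0 : ∀ t, 0 ≤ f t) (hg0 : ∀ t, 0 ≤ g t) :
    ∫ t in t1..t2, f t * g t
      ≤ Real.sqrt (∫ t in t1..t2, (f t)^2) * Real.sqrt (∫ t in t1..t2, (g t)^2) := by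
  set X := ∫ t in t1..t2, f t * g t with hX
  set P := ∫ t in t1..t2, (f t)^2 with hP
  set Q := ∫ t in t1..t2, (g t)^2 with hQ
  have hP0 : 0 ≤ P := intervalIntegral.integral_nonneg h12 (fun u _ => sq_nonneg _)
  have hQ0 : 0 ≤ Q := intervalIntegral.integral_nonneg h12 (fun u _ => sq_nonneg _)
  have hkey : ∀ ε : ℝ, 0 < ε → X ≤ (ε * P + Q / ε) / 2 := by
    intro ε hε
    have hpt : ∀ u ∈ Icc t1 t2, f u * g u ≤ (ε * (f u)^2 + (g u)^2 / ε) / 2 := by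
      intro u _
      have h2 := two_mul_le_add_sq (Real.sqrt ε * f u) (g u / Real.sqrt ε)
      have hsε : Real.sqrt ε * Real.sqrt ε = ε := Real.mul_self_sqrt hε.le
      have hsεpos : 0 < Real.sqrt ε := Real.sqrt_pos.2 hε
      have e1 : 2 * (Real.sqrt ε * f u) * (g u / Real.sqrt ε) = 2 * (f u * g u) := by
        field_simp
      have e2 : (Real.sqrt ε * f u)^2 = ε * (f u)^2 := by
        rw [mul_pow, sq, hsε]
      have e3 : (g u / Real.sqrt ε)^2 = (g u)^2 / ε := by
        rw [div_pow, Real.sq_sqrt hε.le]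
      rw [e1, e2, e3] at h2
      linarith
    have hint : ∫ u in t1..t2, f u * g u
        ≤ ∫ u in t1..t2, (ε * (f u)^2 + (g u)^2 / ε) / 2 := by
      apply intervalIntegral.integral_mono_on h12
        ((hf.mul hg).intervalIntegrable t1 t2)
        ((((continuous_const.mul (hf.pow 2)).add ((hg.pow 2).div_const ε)).div_const 2).intervalIntegrable t1 t2)
        hpt
    have hsplit : ∫ u in t1..t2, (ε * (f u)^2 + (g u)^2 / ε) / 2
        = (ε * P + Q / ε) / 2 := by
      rw [intervalIntegral.integral_div, intervalIntegral.integral_add (f := fun u => ε * (f u)^2) (g := fun u => (g u)^2 / ε)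
        ((continuous_const.mul (hf.pow 2)).intervalIntegrable t1 t2)
        (((hg.pow 2).div_const ε).intervalIntegrable t1 t2),
        intervalIntegral.integral_const_mul, intervalIntegral.integral_div]
    rw [hX]
    calc (∫ u in t1..t2, f u * g u) ≤ _ := hint
      _ = (ε * P + Q / ε) / 2 := hsplit
  have hδ : ∀ δ : ℝ, 0 < δ → X ≤ Real.sqrt (P + δ) * Real.sqrt (Q + δ) := by
    intro δ hδ
    have hPδ : 0 < P + δ := by linarith
    have hQδ : 0 < Q + δ := by linarith
    set ε := Real.sqrt (Q + δ) / Real.sqrt (P + δ) with hε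
    have hsP : 0 < Real.sqrt (P + δ) := Real.sqrt_pos.2 hPδ
    have hsQ : 0 < Real.sqrt (Q + δ) := Real.sqrt_pos.2 hQδ
    have hεpos : 0 < ε := div_pos hsQ hsP
    have h1 := hkey ε hεpos
    have e1 : ε * (P + δ) = Real.sqrt (Q + δ) * Real.sqrt (P + δ) := by
      rw [hε]
      field_simp
      linear_combination (-1:ℝ) * (Real.sq_sqrt hPδ.le)
    have e2 : (Q + δ) / ε = Real.sqrt (Q + δ) * Real.sqrt (P + δ) := by
      rw [hε]
      field_simp
      linear_combination (-1:ℝ) * (Real.sq_sqrt hQδ.le)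
    have h2 : (ε * P + Q / ε) / 2 ≤ (ε * (P + δ) + (Q + δ) / ε) / 2 := by
      have b1 : ε * P ≤ ε * (P + δ) := by nlinarith
      have b2 : Q / ε ≤ (Q + δ) / ε := (div_le_div_iff_of_pos_right hεpos).mpr (by linarith)
      linarith
    have h3 : (ε * (P + δ) + (Q + δ) / ε) / 2 = Real.sqrt (P + δ) * Real.sqrt (Q + δ) := by
      rw [e1, e2]; ring
    linarith
  have hc : Continuous (fun δ : ℝ => Real.sqrt (P + δ) * Real.sqrt (Q + δ)) := by
    apply Continuous.mul
    · exact Real.continuous_sqrt.comp (continuous_const.add continuous_id)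
    · exact Real.continuous_sqrt.comp (continuous_const.add continuous_id)
  have hlim : Tendsto (fun δ : ℝ => Real.sqrt (P + δ) * Real.sqrt (Q + δ)) (nhdsWithin 0 (Ioi 0))
      (nhds (Real.sqrt P * Real.sqrt Q)) := by
    have := (hc.tendsto 0).mono_left (nhdsWithin_le_nhds (s := Ioi (0:ℝ)))
    simpa using this
  exact ge_of_tendsto hlim (eventually_nhdsWithin_of_forall (fun δ hδ' => hδ δ hδ'))

lemma downward_iteration {q : ℕ → ℝ} {K G Θ : ℝ} (hK : 1 ≤ K) (hG : 1 ≤ G) (hΘ : 1 ≤ Θ)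
    (hq0 : ∀ N, 0 ≤ q N)
    (hrec : ∀ N, q N ≤ K + K * (q (N+2)) ^ ((1:ℝ)/4))
    (hap : ∀ N, q N ≤ G * Θ ^ (N:ℝ)) :
    ∀ N, q N ≤ 16 * K ^ 4 := by
  have hK0 : 0 < K := lt_of_lt_of_le one_pos hK
  have hG0 : 0 < G := lt_of_lt_of_le one_pos hG
  have hΘ0 : 0 < Θ := lt_of_lt_of_le one_pos hΘ
  set c : ℝ := 16 * K ^ 4 with hc
  have hc2K : c = (2*K)^(4:ℕ) := by rw [hc]; ring
  have hK4 : 1 ≤ K ^ 4 := by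
    calc (1:ℝ) = 1^4 := by norm_num
      _ ≤ K^4 := pow_le_pow_left₀ (by norm_num) hK 4
  have hc1 : 1 ≤ c := by rw [hc]; nlinarith
  have hc0 : 0 ≤ c := by linarith
  have hX0 : ∀ N k : ℕ, (0:ℝ) < G * Θ ^ ((N:ℝ) + 2*(k:ℝ)) :=
    fun N k => mul_pos hG0 (Real.rpow_pos_of_pos hΘ0 _)
  have hc14 : c ^ ((1:ℝ)/4) = 2*K := by
    rw [hc2K, ← Real.rpow_natCast (2*K) 4, ← Real.rpow_mul (by linarith : (0:ℝ) ≤ 2*K)]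
    norm_num
  have claim : ∀ k N : ℕ, q N ≤ c * max 1 ((G * Θ ^ ((N:ℝ) + 2*(k:ℝ))) ^ (((1:ℝ)/4)^k)) := by
    intro k
    induction k with
    | zero =>
        intro N
        simp only [Nat.cast_zero, mul_zero, add_zero, pow_zero, Real.rpow_one]
        calc q N ≤ G * Θ ^ (N:ℝ) := hap N
          _ ≤ max 1 (G * Θ ^ (N:ℝ)) := le_max_right _ _
          _ ≤ c * max 1 (G * Θ ^ (N:ℝ)) := by
              nlinarith [le_max_left (1:ℝ) (G * Θ ^ (N:ℝ)),
                le_max_right (1:ℝ) (G * Θ ^ (N:ℝ)), hX0 N 0]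
    | succ k ih =>
        intro N
        push_cast
        set X := G * Θ ^ ((N:ℝ) + 2*((k:ℝ)+1)) with hXdef
        have hXpos : 0 < X := by
          rw [hXdef]; exact mul_pos hG0 (Real.rpow_pos_of_pos hΘ0 _)
        have hcast : ((N+2:ℕ):ℝ) + 2*(k:ℝ) = (N:ℝ) + 2*((k:ℝ)+1) := by push_cast; ring
        have h1 : q (N+2) ≤ c * max 1 (X ^ (((1:ℝ)/4)^k)) := by
          have := ih (N+2)
          rwa [hcast] at this
        set M' := max 1 (X ^ (((1:ℝ)/4)^(k+1))) with hM'
        have hM'1 : 1 ≤ M' := le_max_left _ _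
        have hq4 : (q (N+2)) ^ ((1:ℝ)/4) ≤ (c * max 1 (X ^ (((1:ℝ)/4)^k))) ^ ((1:ℝ)/4) :=
          Real.rpow_le_rpow (hq0 _) h1 (by norm_num)
        have hsplit : (c * max 1 (X ^ (((1:ℝ)/4)^k))) ^ ((1:ℝ)/4)
            = c ^ ((1:ℝ)/4) * M' := by
          rw [Real.mul_rpow hc0 (le_max_of_le_left zero_le_one),
            max_one_rpow (Real.rpow_nonneg hXpos.le _) (by norm_num : (0:ℝ) ≤ 1/4),
            ← Real.rpow_mul hXpos.le, ← pow_succ]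
        have h2 : (q (N+2)) ^ ((1:ℝ)/4) ≤ 2*K * M' := by
          rw [hsplit, hc14] at hq4; exact hq4
        have h1k : 1 ≤ K^2 := by nlinarith
        have e2 : K^2 ≤ K^4 := by nlinarith [h1k, sq_nonneg K]
        have e1 : K ≤ K^2 := by nlinarith
        have hK4nn : (0:ℝ) ≤ K^4 := by positivity
        have hstep : K + 2*K^2 ≤ 16*K^4 := by nlinarith [e1, e2, hK4nn]
        calc q N ≤ K + K * (q (N+2)) ^ ((1:ℝ)/4) := hrec N
          _ ≤ K + K * (2*K * M') :=
              add_le_add_right (mul_le_mul_of_nonneg_left h2 hK0.le) K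
          _ = K + 2*K^2*M' := by ring
          _ ≤ K*M' + 2*K^2*M' :=
              add_le_add_left (le_mul_of_one_le_right hK0.le hM'1) _
          _ = (K + 2*K^2)*M' := by ring
          _ ≤ (16*K^4)*M' := mul_le_mul_of_nonneg_right hstep (by linarith)
          _ = c * M' := by rw [hc]
  intro N
  have t1 : Tendsto (fun k : ℕ => ((1:ℝ)/4)^k) atTop (nhds 0) :=
    tendsto_pow_atTop_nhds_zero_of_lt_one (by norm_num) (by norm_num)
  have t2 : Tendsto (fun k : ℕ => (k:ℝ) * ((1:ℝ)/4)^k) atTop (nhds 0) := by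
    have hsum := summable_pow_mul_geometric_of_norm_lt_one (R := ℝ) 1
      (r := (1:ℝ)/4) (by rw [Real.norm_eq_abs, abs_of_pos (by norm_num : (0:ℝ) < 1/4)]; norm_num)
    have := hsum.tendsto_atTop_zero
    simpa using this
  have hlog : Tendsto (fun k : ℕ =>
      ((1:ℝ)/4)^k * (Real.log G + ((N:ℝ) + 2*(k:ℝ)) * Real.log Θ)) atTop (nhds 0) := by
    have e : ∀ k : ℕ, ((1:ℝ)/4)^k * (Real.log G + ((N:ℝ) + 2*(k:ℝ)) * Real.log Θ)
        = (Real.log G + (N:ℝ) * Real.log Θ) * ((1:ℝ)/4)^k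
          + (2 * Real.log Θ) * ((k:ℝ) * ((1:ℝ)/4)^k) := fun k => by ring
    have h1 := (t1.const_mul (Real.log G + (N:ℝ) * Real.log Θ)).add
      (t2.const_mul (2 * Real.log Θ))
    simp only [mul_zero, add_zero] at h1
    exact h1.congr (fun k => (e k).symm)
  have hXk : Tendsto (fun k : ℕ =>
      (G * Θ ^ ((N:ℝ) + 2*(k:ℝ))) ^ (((1:ℝ)/4)^k)) atTop (nhds 1) := by
    have e : ∀ k : ℕ, (G * Θ ^ ((N:ℝ) + 2*(k:ℝ))) ^ (((1:ℝ)/4)^k)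
        = Real.exp (((1:ℝ)/4)^k * (Real.log G + ((N:ℝ) + 2*(k:ℝ)) * Real.log Θ)) := by
      intro k
      rw [Real.rpow_def_of_pos (hX0 N k)]
      congr 1
      rw [Real.log_mul (ne_of_gt hG0) (ne_of_gt (Real.rpow_pos_of_pos hΘ0 _)),
        Real.log_rpow hΘ0]
      ring
    have h1 := (Real.continuous_exp.tendsto 0).comp hlog
    rw [Real.exp_zero] at h1
    exact h1.congr (fun k => (e k).symm)
  have hfin : Tendsto (fun k : ℕ =>
      c * max 1 ((G * Θ ^ ((N:ℝ) + 2*(k:ℝ))) ^ (((1:ℝ)/4)^k))) atTop (nhds c) := by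
    have h1 := (tendsto_const_nhds (x := (1:ℝ)) (f := atTop (α := ℕ))).max hXk
    rw [max_self] at h1
    have h2 := h1.const_mul c
    rwa [mul_one] at h2
  exact ge_of_tendsto hfin (Filter.Eventually.of_forall (fun k => claim k N))


lemma lam_rpow (x : ℝ) : lam ^ x = (2:ℝ) ^ ((5:ℝ)/2 * x) := by
  show ((2:ℝ) ^ ((5:ℝ)/2)) ^ x = _
  rw [← Real.rpow_mul (by norm_num : (0:ℝ) ≤ 2)]

set_option maxHeartbeats 1000000 in
theorem local_integrability (a : ℝ → ℕ → ℝ) (ha : IsDyadicSolution (lam ^ (-(1:ℝ)/3)) a)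
    (h0 : ∀ j, 0 ≤ a 0 j) (s : ℝ) (hs : s < 5/6) :
    ∀ t1 t2 : ℝ, 0 ≤ t1 → t1 ≤ t2 →
      IntervalIntegrable (fun t => ∑' j : ℕ, (2:ℝ)^(2*s*(j:ℝ)) * (a t j)^2) volume t1 t2 := by
  intro t1 t2 ht1 ht12
  rcases ht12.eq_or_lt with heq | h12
  · subst heq
    rw [intervalIntegrable_iff_integrableOn_Ioc_of_le le_rfl]
    simp
  set f0 : ℝ := lam ^ (-(1:ℝ)/3) with hf0def
  have hf0 : 0 < f0 := Real.rpow_pos_of_pos lam_pos _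
  set A : ℕ → ℝ → ℝ := fun j t => a (max t 0) j with hA
  have hAc : ∀ j, Continuous (A j) := fun j => sol_cont ha j
  have hApos : ∀ j t, 0 ≤ A j t := fun j t => sol_nonneg hf0 ha h0 j t
  have hAa : ∀ (j : ℕ) (t : ℝ), 0 ≤ t → A j t = a t j := fun j t ht => by
    rw [hA]; simp [max_eq_left ht]
  have ht20 : 0 ≤ t2 := le_trans ht1 ht12
  set S0 : ℝ := ∑' j, (a 0 j)^2 with hS0def
  have hS00 : 0 ≤ S0 := tsum_nonneg fun j => sq_nonneg _
  set B : ℝ := (1 + S0) * Real.exp (f0 * t2) with hBdef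
  have hB1 : 1 ≤ B := by
    have h1 : (1:ℝ) ≤ 1 + S0 := by linarith
    have h2 : (1:ℝ) ≤ Real.exp (f0 * t2) := Real.one_le_exp (mul_nonneg hf0.le ht20)
    nlinarith
  have hB0 : 0 < B := lt_of_lt_of_le one_pos hB1
  have hEbd : ∀ N : ℕ, ∀ t ∈ Icc t1 t2, ∑ j ∈ range (N+1), (A j t)^2 ≤ B := by
    intro N t ht
    exact energy_bound hf0 ha h0 ht20 N t ⟨le_trans ht1 ht.1, ht.2⟩
  have hsqB : ∀ j : ℕ, ∀ t ∈ Icc t1 t2, (A j t)^2 ≤ B := by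
    intro j t ht
    calc (A j t)^2 ≤ ∑ i ∈ range (j+1), (A i t)^2 :=
        Finset.single_le_sum (f := fun i => (A i t)^2) (fun i _ => sq_nonneg _)
          (Finset.mem_range.2 (Nat.lt_succ_self j))
      _ ≤ B := hEbd j t ht
  have hABd : ∀ j : ℕ, ∀ t ∈ Icc t1 t2, A j t ≤ Real.sqrt B := by
    intro j t ht
    calc A j t = Real.sqrt ((A j t)^2) := (Real.sqrt_sq (hApos j t)).symm
      _ ≤ Real.sqrt B := Real.sqrt_le_sqrt (hsqB j t ht)
  set Δ : ℝ := t2 - t1 with hΔdef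
  have hΔ : 0 < Δ := by rw [hΔdef]; linarith
  have hii : ∀ F : ℝ → ℝ, Continuous F → IntervalIntegrable F volume t1 t2 :=
    fun F hF => hF.intervalIntegrable t1 t2
  have hintA : ∀ j : ℕ, ∫ t in t1..t2, A j t ≤ Real.sqrt B * Δ := by
    intro j
    calc ∫ t in t1..t2, A j t ≤ ∫ t in t1..t2, Real.sqrt B :=
        intervalIntegral.integral_mono_on h12.le (hii _ (hAc j)) (hii _ continuous_const)
          (hABd j)
      _ = Δ * Real.sqrt B := by rw [intervalIntegral.integral_const, smul_eq_mul]
      _ = Real.sqrt B * Δ := mul_comm _ _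
  set C0 : ℝ := f0 * (Real.sqrt B * Δ) + B/2 with hC0def
  have hC00 : 0 < C0 := by
    have h1 : 0 ≤ f0 * (Real.sqrt B * Δ) :=
      mul_nonneg hf0.le (mul_nonneg (Real.sqrt_nonneg _) hΔ.le)
    rw [hC0def]; exact add_pos_of_nonneg_of_pos h1 (by linarith)
  have hflux : ∀ N : ℕ, lam ^ N * ∫ t in t1..t2, (A N t)^2 * A (N+1) t ≤ C0 := by
    intro N
    set EN : ℝ → ℝ := fun u => ∑ j ∈ range (N+1), (A j u)^2 with hEN
    have hENc : Continuous EN := continuous_finset_sum _ (fun j _ => (hAc j).pow 2)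
    set D : ℝ → ℝ := fun u => 2 * (f0 * A 0 u - lam ^ N * ((A N u)^2 * A (N+1) u)) with hD
    have hDc : Continuous D := by
      apply continuous_const.mul
      exact (continuous_const.mul (hAc 0)).sub
        (continuous_const.mul (((hAc N).pow 2).mul (hAc (N+1))))
    have hder : ∀ x ∈ Ioo t1 t2, HasDerivWithinAt EN (D x) (Ioi x) x := by
      intro x hx
      have hx0 : 0 < x := lt_of_le_of_lt ht1 hx.1
      have h1 : ∀ j ∈ range (N+1), HasDerivAt (fun u => (A j u)^2)
          ((2:ℕ) * (A j x) ^ 1 * dyadicRHS f0 (fun i => A i x) j) x :=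
        fun j _ => (sol_hasDerivAt ha j hx0).pow 2
      have h2 := HasDerivAt.fun_sum h1
      have h3 : ∑ j ∈ range (N+1), ((2:ℕ) * (A j x) ^ 1 * dyadicRHS f0 (fun i => A i x) j)
          = D x := by
        simp only [pow_one, Nat.cast_ofNat, mul_assoc]
        rw [← Finset.mul_sum, sum_mul_dyadicRHS]
        show (2:ℝ) * (f0 * A 0 x - lam ^ N * (A N x)^2 * A (N+1) x) = _
        rw [hD]; ring
      rw [h3] at h2
      exact h2.hasDerivWithinAt
    have hFTC : ∫ u in t1..t2, D u = EN t2 - EN t1 :=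
      intervalIntegral.integral_eq_sub_of_hasDeriv_right_of_le h12.le hENc.continuousOn
        hder (hii D hDc)
    have hsplit : ∫ u in t1..t2, D u
        = 2 * (f0 * (∫ u in t1..t2, A 0 u)
            - lam ^ N * ∫ u in t1..t2, (A N u)^2 * A (N+1) u) := by
      simp only [hD]
      rw [intervalIntegral.integral_const_mul]
      congr 1
      rw [intervalIntegral.integral_sub (f := fun x => f0 * A 0 x) (g := fun x => lam ^ N * ((A N x)^2 * A (N+1) x)) (hii _ (continuous_const.mul (hAc 0)))
        (hii _ (continuous_const.mul (((hAc N).pow 2).mul (hAc (N+1)))))]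
      rw [intervalIntegral.integral_const_mul, intervalIntegral.integral_const_mul]
    rw [hsplit] at hFTC
    have hEN2 : 0 ≤ EN t2 := Finset.sum_nonneg fun j _ => sq_nonneg _
    have hEN1 : EN t1 ≤ B := hEbd N t1 (left_mem_Icc.2 h12.le)
    have hfA0 : f0 * (∫ u in t1..t2, A 0 u) ≤ f0 * (Real.sqrt B * Δ) :=
      mul_le_mul_of_nonneg_left (hintA 0) hf0.le
    rw [hC0def]
    set Y : ℝ := ∫ t in t1..t2, (A N t)^2 * A (N+1) t with hYdef
    set X : ℝ := ∫ u in t1..t2, A 0 u with hXdef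
    set E2 : ℝ := EN t2 with hE2def
    set E1 : ℝ := EN t1 with hE1def
    set Z : ℝ := Real.sqrt B * Δ with hZdef
    linarith [hFTC, hEN2, hEN1, hfA0]
  set uu : ℕ → ℝ := fun N => ∫ t in t1..t2, (A N t)^2 with huudef
  have huu0 : ∀ N, 0 ≤ uu N := fun N =>
    intervalIntegral.integral_nonneg h12.le (fun u _ => sq_nonneg _)
  have huuB : ∀ N, uu N ≤ B * Δ := by
    intro N
    calc uu N ≤ ∫ t in t1..t2, B :=
        intervalIntegral.integral_mono_on h12.le (hii _ ((hAc N).pow 2))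
          (hii _ continuous_const) (hsqB N)
      _ = Δ * B := by rw [intervalIntegral.integral_const, smul_eq_mul]
      _ = B * Δ := mul_comm _ _
  have hmode : ∀ N : ℕ, lam ^ N * uu N
      ≤ Real.sqrt B + lam ^ (N+1) * ∫ t in t1..t2, A (N+1) t * A (N+2) t := by
    intro N
    set D : ℝ → ℝ :=
      fun u => lam ^ N * (A N u)^2 - lam ^ (N+1) * (A (N+1) u * A (N+2) u) with hD
    have hDc : Continuous D :=
      (continuous_const.mul ((hAc N).pow 2)).sub
        (continuous_const.mul ((hAc (N+1)).mul (hAc (N+2))))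
    have hder : ∀ x ∈ Ioo t1 t2, HasDerivWithinAt (A (N+1)) (D x) (Ioi x) x := by
      intro x hx
      have hx0 : 0 < x := lt_of_le_of_lt ht1 hx.1
      have h := sol_hasDerivAt ha (N+1) hx0
      have h3 : dyadicRHS f0 (fun i => A i x) (N+1) = D x := by
        show lam ^ N * (A N x)^2 - lam ^ (N+1) * A (N+1) x * A (N+2) x = _
        rw [hD]; ring
      rw [h3] at h
      exact h.hasDerivWithinAt
    have hFTC : ∫ u in t1..t2, D u = A (N+1) t2 - A (N+1) t1 :=
      intervalIntegral.integral_eq_sub_of_hasDeriv_right_of_le h12.le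
        (hAc (N+1)).continuousOn hder (hii D hDc)
    have hsplit : ∫ u in t1..t2, D u
        = lam ^ N * uu N - lam ^ (N+1) * ∫ u in t1..t2, A (N+1) u * A (N+2) u := by
      simp only [hD]
      rw [intervalIntegral.integral_sub (f := fun u => lam ^ N * (A N u)^2) (g := fun u => lam ^ (N+1) * (A (N+1) u * A (N+2) u)) (hii _ (continuous_const.mul ((hAc N).pow 2)))
        (hii _ (continuous_const.mul ((hAc (N+1)).mul (hAc (N+2)))))]
      rw [intervalIntegral.integral_const_mul, intervalIntegral.integral_const_mul]
    rw [hsplit] at hFTC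
    have hb2 : A (N+1) t2 ≤ Real.sqrt B := hABd (N+1) t2 (right_mem_Icc.2 h12.le)
    have hb1 : 0 ≤ A (N+1) t1 := hApos _ _
    linarith
  set q : ℕ → ℝ := fun N => lam ^ (2*(N:ℝ)/3) * uu N with hqdef
  have hq0 : ∀ N, 0 ≤ q N := fun N => mul_nonneg (Real.rpow_nonneg lam_pos.le _) (huu0 N)
  set K : ℝ := Real.sqrt B + lam * (Real.sqrt C0 * Δ ^ ((1:ℝ)/4)) + 1 with hKdef
  have hK1 : 1 ≤ K := by
    have h1 : 0 ≤ Real.sqrt B := Real.sqrt_nonneg _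
    have h2 : 0 ≤ lam * (Real.sqrt C0 * Δ ^ ((1:ℝ)/4)) :=
      mul_nonneg lam_pos.le (mul_nonneg (Real.sqrt_nonneg _) (Real.rpow_nonneg hΔ.le _))
    rw [hKdef]; linarith
  have hrec : ∀ N, q N ≤ K + K * (q (N+2)) ^ ((1:ℝ)/4) := by
    intro N
    have hq4nn : 0 ≤ (q (N+2)) ^ ((1:ℝ)/4) := Real.rpow_nonneg (hq0 _) _
    set I1 : ℝ := ∫ t in t1..t2, A (N+1) t * A (N+2) t with hI1def
    have hI10 : 0 ≤ I1 := intervalIntegral.integral_nonneg h12.le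
      (fun u _ => mul_nonneg (hApos _ _) (hApos _ _))
    set J : ℝ := ∫ t in t1..t2, (A (N+1) t)^2 * A (N+2) t with hJdef
    have hJ0 : 0 ≤ J := intervalIntegral.integral_nonneg h12.le
      (fun u _ => mul_nonneg (sq_nonneg _) (hApos _ _))
    set IA : ℝ := ∫ t in t1..t2, A (N+2) t with hIAdef
    have hIA0 : 0 ≤ IA := intervalIntegral.integral_nonneg h12.le (fun u _ => hApos _ _)
    have hsqc : Continuous (fun t => Real.sqrt (A (N+2) t)) :=
      Real.continuous_sqrt.comp (hAc (N+2))
    have hcs1 : I1 ≤ Real.sqrt J * Real.sqrt IA := by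
      have h := integral_CS (f := fun t => A (N+1) t * Real.sqrt (A (N+2) t))
        (g := fun t => Real.sqrt (A (N+2) t)) h12.le
        ((hAc (N+1)).mul hsqc) hsqc
        (fun t => mul_nonneg (hApos _ _) (Real.sqrt_nonneg _))
        (fun t => Real.sqrt_nonneg _)
      have e1 : (∫ t in t1..t2,
          (fun t => A (N+1) t * Real.sqrt (A (N+2) t)) t
            * (fun t => Real.sqrt (A (N+2) t)) t) = I1 := by
        rw [hI1def]
        apply intervalIntegral.integral_congr
        intro u _
        simp only
        rw [mul_assoc, Real.mul_self_sqrt (hApos _ _)]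
      have e2 : (∫ t in t1..t2,
          ((fun t => A (N+1) t * Real.sqrt (A (N+2) t)) t)^2) = J := by
        rw [hJdef]
        apply intervalIntegral.integral_congr
        intro u _
        simp only
        rw [mul_pow, Real.sq_sqrt (hApos _ _)]
      have e3 : (∫ t in t1..t2, ((fun t => Real.sqrt (A (N+2) t)) t)^2) = IA := by
        rw [hIAdef]
        apply intervalIntegral.integral_congr
        intro u _
        simp only
        exact Real.sq_sqrt (hApos _ _)
      rw [e1, e2, e3] at h
      exact h
    have hcs2 : IA ≤ Real.sqrt (uu (N+2)) * Real.sqrt Δ := by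
      have h := integral_CS (f := A (N+2)) (g := fun _ => (1:ℝ)) h12.le
        (hAc (N+2)) continuous_const (hApos (N+2)) (fun _ => zero_le_one)
      have e1 : (∫ t in t1..t2, A (N+2) t * (fun _ => (1:ℝ)) t) = IA := by
        rw [hIAdef]
        apply intervalIntegral.integral_congr
        intro u _
        simp
      have e2 : (∫ t in t1..t2, ((fun _ => (1:ℝ)) t)^2) = Δ := by
        simp [hΔdef]
      have e3 : (∫ t in t1..t2, (A (N+2) t)^2) = uu (N+2) := rfl
      rw [e1, e2, e3] at h
      exact h
    have hcastN : (lam : ℝ) ^ (N : ℕ) = lam ^ ((N:ℝ)) := (Real.rpow_natCast lam N).symm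
    have hcast1 : (lam : ℝ) ^ (N+1 : ℕ) = lam ^ ((N:ℝ)+1) := by
      rw [← Real.rpow_natCast lam (N+1)]
      congr 1
      push_cast
      ring
    have hm : lam ^ (N:ℕ) * uu N ≤ Real.sqrt B + lam ^ (N+1:ℕ) * I1 := hmode N
    have hm' : lam ^ ((N:ℝ)) * uu N ≤ Real.sqrt B + lam ^ ((N:ℝ)+1) * I1 := by
      rw [← hcastN, ← hcast1]; exact hm
    have hJle : J ≤ lam ^ (-((N:ℝ)+1)) * C0 := by
      have h : lam ^ (N+1:ℕ) * J ≤ C0 := hflux (N+1)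
      rw [hcast1] at h
      have h2 := mul_le_mul_of_nonneg_left h (Real.rpow_nonneg lam_pos.le (-((N:ℝ)+1)))
      rw [← mul_assoc, ← Real.rpow_add lam_pos, neg_add_cancel, Real.rpow_zero, one_mul] at h2
      exact h2
    have hsJ : Real.sqrt J ≤ lam ^ (-(((N:ℝ)+1)/2)) * Real.sqrt C0 := by
      have h1 := Real.sqrt_le_sqrt hJle
      rw [Real.sqrt_mul (Real.rpow_nonneg lam_pos.le _) C0] at h1
      have e2 : Real.sqrt (lam ^ (-((N:ℝ)+1))) = lam ^ (-(((N:ℝ)+1)/2)) := by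
        rw [Real.sqrt_eq_rpow, ← Real.rpow_mul lam_pos.le]
        congr 1
        ring
      rwa [e2] at h1
    have hsIA : Real.sqrt IA
        ≤ (lam ^ (-(((N:ℝ)+2)/6)) * (q (N+2)) ^ ((1:ℝ)/4)) * Δ ^ ((1:ℝ)/4) := by
      have h1 := Real.sqrt_le_sqrt hcs2
      rw [Real.sqrt_mul (Real.sqrt_nonneg _) _] at h1
      have e3 : Real.sqrt (Real.sqrt (uu (N+2))) = (uu (N+2)) ^ ((1:ℝ)/4) := by
        rw [Real.sqrt_eq_rpow, Real.sqrt_eq_rpow, ← Real.rpow_mul (huu0 (N+2))]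
        norm_num
      have e4 : Real.sqrt (Real.sqrt Δ) = Δ ^ ((1:ℝ)/4) := by
        rw [Real.sqrt_eq_rpow, Real.sqrt_eq_rpow, ← Real.rpow_mul hΔ.le]
        norm_num
      have e5 : uu (N+2) = lam ^ (-(2*((N:ℝ)+2)/3)) * q (N+2) := by
        have c1 : 2*(((N+2:ℕ)):ℝ)/3 = 2*((N:ℝ)+2)/3 := by push_cast; ring
        have h5 : lam ^ (-(2*((N:ℝ)+2)/3)) * q (N+2) = uu (N+2) := by
          simp only [hqdef, c1]
          rw [← mul_assoc, ← Real.rpow_add lam_pos, neg_add_cancel, Real.rpow_zero, one_mul]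
        exact h5.symm
      have e6 : (uu (N+2)) ^ ((1:ℝ)/4)
          = lam ^ (-(((N:ℝ)+2)/6)) * (q (N+2)) ^ ((1:ℝ)/4) := by
        rw [e5, Real.mul_rpow (Real.rpow_nonneg lam_pos.le _) (hq0 (N+2)),
          ← Real.rpow_mul lam_pos.le]
        congr 2
        ring
      rw [e3, e4, e6] at h1
      exact h1
    have hprod : Real.sqrt J * Real.sqrt IA
        ≤ (lam ^ (-(((N:ℝ)+1)/2)) * Real.sqrt C0)
          * ((lam ^ (-(((N:ℝ)+2)/6)) * (q (N+2)) ^ ((1:ℝ)/4)) * Δ ^ ((1:ℝ)/4)) :=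
      mul_le_mul hsJ hsIA (Real.sqrt_nonneg _)
        (mul_nonneg (Real.rpow_nonneg lam_pos.le _) (Real.sqrt_nonneg _))
    have e0 : lam ^ (2*(N:ℝ)/3) = lam ^ (2*(N:ℝ)/3 - (N:ℝ)) * lam ^ ((N:ℝ)) := by
      rw [← Real.rpow_add lam_pos]
      congr 1
      ring
    have e1 : lam ^ (2*(N:ℝ)/3 - (N:ℝ)) * lam ^ ((N:ℝ)+1) = lam ^ (2*(N:ℝ)/3 + 1) := by
      rw [← Real.rpow_add lam_pos]
      congr 1
      ring
    have e7 : lam ^ (2*(N:ℝ)/3 + 1)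
        * ((lam ^ (-(((N:ℝ)+1)/2)) * Real.sqrt C0)
          * ((lam ^ (-(((N:ℝ)+2)/6)) * (q (N+2)) ^ ((1:ℝ)/4)) * Δ ^ ((1:ℝ)/4)))
        = lam ^ ((1:ℝ)/6) * (Real.sqrt C0 * Δ ^ ((1:ℝ)/4)) * (q (N+2)) ^ ((1:ℝ)/4) := by
      rw [show lam ^ (2*(N:ℝ)/3 + 1)
          * ((lam ^ (-(((N:ℝ)+1)/2)) * Real.sqrt C0)
            * ((lam ^ (-(((N:ℝ)+2)/6)) * (q (N+2)) ^ ((1:ℝ)/4)) * Δ ^ ((1:ℝ)/4)))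
          = (lam ^ (2*(N:ℝ)/3 + 1) * lam ^ (-(((N:ℝ)+1)/2)) * lam ^ (-(((N:ℝ)+2)/6)))
            * ((Real.sqrt C0 * Δ ^ ((1:ℝ)/4)) * (q (N+2)) ^ ((1:ℝ)/4)) from by ring]
      rw [← Real.rpow_add lam_pos, ← Real.rpow_add lam_pos]
      rw [show 2*(N:ℝ)/3 + 1 + -(((N:ℝ)+1)/2) + -(((N:ℝ)+2)/6) = (1:ℝ)/6 from by ring]
      ring
    have e8 : lam ^ ((1:ℝ)/6) ≤ lam := by
      calc lam ^ ((1:ℝ)/6) ≤ lam ^ ((1:ℝ)) :=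
          Real.rpow_le_rpow_of_exponent_le one_le_lam (by norm_num)
        _ = lam := Real.rpow_one lam
    have hle1 : lam ^ (2*(N:ℝ)/3 - (N:ℝ)) ≤ 1 :=
      Real.rpow_le_one_of_one_le_of_nonpos one_le_lam
        (by linarith [Nat.cast_nonneg (α := ℝ) N])
    have hT0 : 0 ≤ lam * (Real.sqrt C0 * Δ ^ ((1:ℝ)/4)) :=
      mul_nonneg lam_pos.le (mul_nonneg (Real.sqrt_nonneg _) (Real.rpow_nonneg hΔ.le _))
    have hKB : Real.sqrt B ≤ K := by rw [hKdef]; linarith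
    have hKC : lam ^ ((1:ℝ)/6) * (Real.sqrt C0 * Δ ^ ((1:ℝ)/4)) ≤ K := by
      have h9 : lam ^ ((1:ℝ)/6) * (Real.sqrt C0 * Δ ^ ((1:ℝ)/4))
          ≤ lam * (Real.sqrt C0 * Δ ^ ((1:ℝ)/4)) :=
        mul_le_mul_of_nonneg_right e8
          (mul_nonneg (Real.sqrt_nonneg _) (Real.rpow_nonneg hΔ.le _))
      rw [hKdef]
      have h10 : 0 ≤ Real.sqrt B := Real.sqrt_nonneg _
      linarith
    calc q N = lam ^ (2*(N:ℝ)/3) * uu N := by simp only [hqdef]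
      _ = lam ^ (2*(N:ℝ)/3 - (N:ℝ)) * (lam ^ ((N:ℝ)) * uu N) := by rw [e0, mul_assoc]
      _ ≤ lam ^ (2*(N:ℝ)/3 - (N:ℝ)) * (Real.sqrt B + lam ^ ((N:ℝ)+1) * I1) :=
          mul_le_mul_of_nonneg_left hm' (Real.rpow_nonneg lam_pos.le _)
      _ = lam ^ (2*(N:ℝ)/3 - (N:ℝ)) * Real.sqrt B
          + (lam ^ (2*(N:ℝ)/3 - (N:ℝ)) * lam ^ ((N:ℝ)+1)) * I1 := by ring
      _ ≤ 1 * Real.sqrt B + lam ^ (2*(N:ℝ)/3 + 1) * I1 := by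
          apply add_le_add
          · exact mul_le_mul_of_nonneg_right hle1 (Real.sqrt_nonneg _)
          · rw [e1]
      _ = Real.sqrt B + lam ^ (2*(N:ℝ)/3 + 1) * I1 := by rw [one_mul]
      _ ≤ Real.sqrt B + lam ^ (2*(N:ℝ)/3 + 1) * (Real.sqrt J * Real.sqrt IA) := by
          have h11 := mul_le_mul_of_nonneg_left hcs1
            (Real.rpow_nonneg lam_pos.le (2*(N:ℝ)/3 + 1))
          linarith
      _ ≤ Real.sqrt B + lam ^ (2*(N:ℝ)/3 + 1)
            * ((lam ^ (-(((N:ℝ)+1)/2)) * Real.sqrt C0)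
              * ((lam ^ (-(((N:ℝ)+2)/6)) * (q (N+2)) ^ ((1:ℝ)/4)) * Δ ^ ((1:ℝ)/4))) := by
          have h12' := mul_le_mul_of_nonneg_left hprod
            (Real.rpow_nonneg lam_pos.le (2*(N:ℝ)/3 + 1))
          linarith
      _ = Real.sqrt B + lam ^ ((1:ℝ)/6) * (Real.sqrt C0 * Δ ^ ((1:ℝ)/4))
            * (q (N+2)) ^ ((1:ℝ)/4) := by rw [e7]
      _ ≤ K + K * (q (N+2)) ^ ((1:ℝ)/4) := by
          have h13 := mul_le_mul_of_nonneg_right hKC hq4nn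
          linarith
  have hap : ∀ N, q N ≤ (B*Δ + 1) * (lam ^ ((2:ℝ)/3)) ^ (N:ℝ) := by
    intro N
    have h1 : (lam ^ ((2:ℝ)/3)) ^ (N:ℝ) = lam ^ (2*(N:ℝ)/3) := by
      rw [← Real.rpow_mul lam_pos.le]
      congr 1
      ring
    rw [h1]
    simp only [hqdef]
    calc lam ^ (2*(N:ℝ)/3) * uu N ≤ lam ^ (2*(N:ℝ)/3) * (B*Δ) :=
        mul_le_mul_of_nonneg_left (huuB N) (Real.rpow_nonneg lam_pos.le _)
      _ = (B*Δ) * lam ^ (2*(N:ℝ)/3) := mul_comm _ _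
      _ ≤ (B*Δ+1) * lam ^ (2*(N:ℝ)/3) :=
        mul_le_mul_of_nonneg_right (by linarith) (Real.rpow_nonneg lam_pos.le _)
  have hΘ1 : 1 ≤ lam ^ ((2:ℝ)/3) := by
    calc (1:ℝ) = lam ^ (0:ℝ) := (Real.rpow_zero lam).symm
      _ ≤ lam ^ ((2:ℝ)/3) := Real.rpow_le_rpow_of_exponent_le one_le_lam (by norm_num)
  have hG1 : 1 ≤ B*Δ + 1 := by nlinarith [mul_pos hB0 hΔ]
  have hqbd : ∀ N, q N ≤ 16 * K^4 :=
    downward_iteration hK1 hG1 hΘ1 hq0 hrec hap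
  have huufin : ∀ N : ℕ, uu N ≤ (16*K^4) * lam ^ (-(2*(N:ℝ)/3)) := by
    intro N
    have h1 : uu N = lam ^ (-(2*(N:ℝ)/3)) * q N := by
      rw [hqdef]
      rw [← mul_assoc, ← Real.rpow_add lam_pos]
      norm_num
    rw [h1]
    calc lam ^ (-(2*(N:ℝ)/3)) * q N ≤ lam ^ (-(2*(N:ℝ)/3)) * (16*K^4) :=
        mul_le_mul_of_nonneg_left (hqbd N) (Real.rpow_nonneg lam_pos.le _)
      _ = (16*K^4) * lam ^ (-(2*(N:ℝ)/3)) := mul_comm _ _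
  -- final assembly
  have hcnn : (0:ℝ) ≤ 16*K^4 := by positivity
  set ρ : ℝ := (2:ℝ) ^ (2*s - 5/3) with hρdef
  have hρ0 : 0 ≤ ρ := Real.rpow_nonneg (by norm_num) _
  have hρ1 : ρ < 1 := by
    rw [hρdef]
    exact Real.rpow_lt_one_of_one_lt_of_neg one_lt_two (by linarith)
  have hterm : ∀ j : ℕ, (2:ℝ)^(2*s*(j:ℝ)) * uu j ≤ (16*K^4) * ρ^j := by
    intro j
    have h2nn : (0:ℝ) ≤ (2:ℝ)^(2*s*(j:ℝ)) := Real.rpow_nonneg (by norm_num) _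
    have h1 : (2:ℝ)^(2*s*(j:ℝ)) * uu j
        ≤ (2:ℝ)^(2*s*(j:ℝ)) * ((16*K^4) * lam ^ (-(2*(j:ℝ)/3))) :=
      mul_le_mul_of_nonneg_left (huufin j) h2nn
    have h2 : (2:ℝ)^(2*s*(j:ℝ)) * ((16*K^4) * lam ^ (-(2*(j:ℝ)/3))) = (16*K^4) * ρ^j := by
      rw [lam_rpow (-(2*(j:ℝ)/3))]
      rw [show (2:ℝ)^(2*s*(j:ℝ)) * ((16*K^4) * (2:ℝ) ^ ((5:ℝ)/2 * (-(2*(j:ℝ)/3))))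
        = (16*K^4) * ((2:ℝ)^(2*s*(j:ℝ)) * (2:ℝ) ^ ((5:ℝ)/2 * (-(2*(j:ℝ)/3)))) from by ring]
      rw [← Real.rpow_add (by norm_num : (0:ℝ) < 2)]
      rw [show 2*s*(j:ℝ) + (5:ℝ)/2 * (-(2*(j:ℝ)/3)) = (2*s - 5/3) * (j:ℝ) from by ring]
      rw [Real.rpow_mul (by norm_num : (0:ℝ) ≤ 2), Real.rpow_natCast]
    rw [h2] at h1
    exact h1
  have hgeo : Summable (fun j : ℕ => (16*K^4) * ρ^j) :=
    (summable_geometric_of_lt_one hρ0 hρ1).mul_left _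
  rw [intervalIntegrable_iff_integrableOn_Ioc_of_le h12.le]
  have htermnn : ∀ (t : ℝ) (j : ℕ), 0 ≤ (2:ℝ)^(2*s*(j:ℝ)) * (a t j)^2 :=
    fun t j => mul_nonneg (Real.rpow_nonneg (by norm_num) _) (sq_nonneg _)
  set Fe : ℝ → ENNReal :=
    fun t => ∑' j : ℕ, ENNReal.ofReal ((2:ℝ)^(2*s*(j:ℝ)) * (A j t)^2) with hFedef
  have hFeq : ∀ t ∈ Ioc t1 t2,
      (∑' j : ℕ, (2:ℝ)^(2*s*(j:ℝ)) * (a t j)^2) = (Fe t).toReal := by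
    intro t ht
    have ht0 : 0 ≤ t := le_trans ht1 ht.1.le
    rw [tsum_eq_toReal (htermnn t)]
    congr 1
    simp only [hFedef]
    apply tsum_congr
    intro j
    rw [hAa j t ht0]
  have hmeasj : ∀ j : ℕ, Measurable (fun t => ENNReal.ofReal ((2:ℝ)^(2*s*(j:ℝ)) * (A j t)^2)) :=
    fun j => ((continuous_const.mul ((hAc j).pow 2)).measurable).ennreal_ofReal
  have hmeas : Measurable fun t => (Fe t).toReal := by
    apply Measurable.ennreal_toReal
    simp only [hFedef]
    exact Measurable.ennreal_tsum hmeasj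
  refine ⟨hmeas.aestronglyMeasurable.congr ?_, ?_⟩
  · exact (ae_restrict_iff' measurableSet_Ioc).2
      (Filter.Eventually.of_forall (fun t ht => (hFeq t ht).symm))
  · rw [hasFiniteIntegral_iff_ofReal ((ae_restrict_iff' measurableSet_Ioc).2
      (Filter.Eventually.of_forall (fun t _ => tsum_nonneg (htermnn t))))]
    have hb1 : (∫⁻ t in Ioc t1 t2, ENNReal.ofReal (∑' j : ℕ, (2:ℝ)^(2*s*(j:ℝ)) * (a t j)^2))
        ≤ ∫⁻ t in Ioc t1 t2, Fe t := by
      apply lintegral_mono_ae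
      apply (ae_restrict_iff' measurableSet_Ioc).2
      apply Filter.Eventually.of_forall
      intro t ht
      rw [hFeq t ht]
      exact ENNReal.ofReal_toReal_le
    have hb2 : (∫⁻ t in Ioc t1 t2, Fe t)
        = ∑' j : ℕ, ∫⁻ t in Ioc t1 t2, ENNReal.ofReal ((2:ℝ)^(2*s*(j:ℝ)) * (A j t)^2) := by
      simp only [hFedef]
      exact lintegral_tsum (fun j => (hmeasj j).aemeasurable)
    have hb3 : ∀ j : ℕ, (∫⁻ t in Ioc t1 t2, ENNReal.ofReal ((2:ℝ)^(2*s*(j:ℝ)) * (A j t)^2))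
        ≤ ENNReal.ofReal ((16*K^4) * ρ^j) := by
      intro j
      have hInt : IntegrableOn (fun t => (2:ℝ)^(2*s*(j:ℝ)) * (A j t)^2) (Ioc t1 t2) volume :=
        (continuous_const.mul ((hAc j).pow 2)).integrableOn_Ioc
      rw [← ofReal_integral_eq_lintegral_ofReal hInt
        (Filter.Eventually.of_forall
          (fun t => mul_nonneg (Real.rpow_nonneg (by norm_num) _) (sq_nonneg _)))]
      apply ENNReal.ofReal_le_ofReal
      have e2 : (∫ t in Ioc t1 t2, (2:ℝ)^(2*s*(j:ℝ)) * (A j t)^2)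
          = (2:ℝ)^(2*s*(j:ℝ)) * uu j := by
        rw [← intervalIntegral.integral_of_le h12.le, intervalIntegral.integral_const_mul]
      rw [e2]
      exact hterm j
    have hb4 : (∑' j : ℕ, ∫⁻ t in Ioc t1 t2, ENNReal.ofReal ((2:ℝ)^(2*s*(j:ℝ)) * (A j t)^2))
        ≤ ∑' j : ℕ, ENNReal.ofReal ((16*K^4) * ρ^j) := ENNReal.tsum_le_tsum hb3
    have hb5 : (∑' j : ℕ, ENNReal.ofReal ((16*K^4) * ρ^j)) < ⊤ := by
      rw [← ENNReal.ofReal_tsum_of_nonneg (fun j => mul_nonneg hcnn (pow_nonneg hρ0 j)) hgeo]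
      exact ENNReal.ofReal_lt_top
    refine lt_of_le_of_lt (le_trans hb1 ?_) hb5
    rw [hb2]
    exact hb4
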